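/- Let q̂_t^ε(k) and q̂_t^0(k) be continuous families with 0 ≤ q̂_t^0(k) = e^{−(t/2)(|k|²+m²)}, 0 ≤ q̂_t^ε(k) ≤ e^{−(t/2)(|k|²/4 + m²)}, and 0 ≤ q̂_t^ε(k) − q̂_t^0(k) ≤ e^{−(t/2)(|k|²/4+m²)} (t/2)|k|² h(εk) where 0 ≤ h(εk) ≤ min(1, C ε²|k|²). Then for any 0 < κ ≤ 4, Σ_{k ∈ 2πℤ²} (1+|k|²)^{−κ} ∫₀^∞ |q̂_u^ε(k) − q̂_u^0(k)|² du ≤ C' ε^κ for a constant C' depending on κ, m, C. -/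

import Mathlib

open MeasureTheory Set Real

set_option maxHeartbeats 2000000

/-- `|k|²` for `k` in the dual lattice `2πℤ²`. -/
noncomputable def dualNormSq (k : ℤ × ℤ) : ℝ :=
  (2 * π * k.1) ^ 2 + (2 * π * k.2) ^ 2

lemma dualNormSq_nonneg (k : ℤ × ℤ) : 0 ≤ dualNormSq k := by
  unfold dualNormSq; positivity

lemma le_dualNormSq (k : ℤ × ℤ) : (k.1:ℝ)^2 + (k.2:ℝ)^2 ≤ dualNormSq k := by
  have h1 : (1:ℝ) ≤ (2*π)^2 := by nlinarith [pi_gt_three]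
  unfold dualNormSq
  nlinarith [sq_nonneg (k.1:ℝ), sq_nonneg (k.2:ℝ)]

lemma summable_aux (t : ℝ) (ht : 1/2 < t) :
    Summable (fun n : ℤ => (1 + (n:ℝ)^2) ^ (-t)) := by
  have h2t : 1 < 2*t := by linarith
  have hs : Summable (fun n : ℤ => 1 / |(n:ℝ) + 1/2| ^ (2*t)) := by
    have := (Real.summable_one_div_int_add_rpow (1/2) (2*t)).mpr h2t
    exact this
  refine Summable.of_nonneg_of_le (fun n => ?_) (fun n => ?_) (hs.mul_left ((2:ℝ)^t))
  · positivity
  · have hx : (0:ℝ) < |(n:ℝ) + 1/2| := by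
      rcases le_or_gt 0 n with hn | hn
      · have : (0:ℝ) ≤ (n:ℝ) := by exact_mod_cast hn
        rw [abs_of_pos (by linarith)]; linarith
      · have hn' : n ≤ -1 := by omega
        have hn1 : (n:ℝ) ≤ -1 := by exact_mod_cast hn'
        rw [abs_of_neg (by linarith)]; linarith
    have hbase : |(n:ℝ)+1/2|^2 ≤ 2 * (1 + (n:ℝ)^2) := by
      rw [sq_abs]
      nlinarith [sq_nonneg ((n:ℝ) - 1/2)]
    have key : (1/(1+(n:ℝ)^2) : ℝ) ^ t ≤ (2 / |(n:ℝ)+1/2|^2) ^ t := by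
      apply Real.rpow_le_rpow (by positivity) ?_ (by linarith)
      rw [div_le_div_iff₀ (by positivity) (pow_pos hx 2)]
      nlinarith
    calc (1 + (n:ℝ)^2) ^ (-t)
        = (1/(1+(n:ℝ)^2)) ^ t := by
          rw [Real.rpow_neg (by positivity), one_div, Real.inv_rpow (by positivity)]
      _ ≤ (2 / |(n:ℝ)+1/2|^2) ^ t := key
      _ = 2^t * (1 / |(n:ℝ)+1/2| ^ (2*t)) := by
          rw [Real.div_rpow (by norm_num) (by positivity), mul_one_div]
          congr 1
          rw [← Real.rpow_natCast |(n:ℝ)+1/2| 2, ← Real.rpow_mul (abs_nonneg _)]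
          congr 1

set_option maxHeartbeats 1000000 in
lemma summable_prod_aux (t : ℝ) (ht : 1/2 < t) :
    Summable (fun k : ℤ × ℤ => (1 + (k.1:ℝ)^2) ^ (-t) * (1 + (k.2:ℝ)^2) ^ (-t)) := by
  have h := summable_aux t ht
  have h' : Summable fun n : ℤ => ‖(1 + (n:ℝ)^2) ^ (-t)‖ :=
    h.congr fun n => (Real.norm_of_nonneg (Real.rpow_nonneg (by positivity) _)).symm
  exact summable_mul_of_summable_norm (f := fun n : ℤ => (1 + (n:ℝ)^2) ^ (-t))
    (g := fun n : ℤ => (1 + (n:ℝ)^2) ^ (-t)) h' h'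

set_option maxHeartbeats 1000000 in
lemma rpow_bound (κ : ℝ) (hκ0 : 0 < κ) (hκ4 : κ ≤ 4) (α N a : ℝ)
    (hα : 0 < α) (hN : 0 ≤ N) (ha : α * (1+N) ≤ a) (ha0 : 0 < a) :
    (1+N)^(-κ) * (N ^ (κ/2) * N^2 / (2*a^3)) ≤ (α^3)⁻¹ * (1+N)^(-(1+κ/2)) := by
  have h1N : (0:ℝ) < 1 + N := by linarith
  have hb1 : N ^ (κ/2) ≤ (1+N)^(κ/2) := Real.rpow_le_rpow hN (by linarith) (by linarith)
  have hb2 : (N:ℝ)^2 ≤ (1+N)^2 := by nlinarith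
  have hb3 : (α*(1+N))^3 ≤ a^3 := pow_le_pow_left₀ (mul_nonneg hα.le h1N.le) ha 3
  have e2 : ((1+N):ℝ)^(2:ℕ) = (1+N)^((2:ℝ)) := by
    rw [← Real.rpow_natCast (1+N) 2]; norm_num
  have e3 : ((1+N):ℝ)^(3:ℕ) = (1+N)^((3:ℝ)) := by
    rw [← Real.rpow_natCast (1+N) 3]; norm_num
  have key : (1+N)^(-κ) * ((1+N)^(κ/2) * (1+N)^(2:ℝ) / ((1+N)^(3:ℝ)))
      = (1+N)^(-(1+κ/2)) := by
    rw [div_eq_mul_inv, ← Real.rpow_neg h1N.le, ← Real.rpow_add h1N, ← Real.rpow_add h1N,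
      ← Real.rpow_add h1N]
    congr 1; ring
  calc (1+N)^(-κ) * (N^(κ/2) * N^2 / (2*a^3))
      ≤ (1+N)^(-κ) * ((1+N)^(κ/2) * (1+N)^2 / (2*(α*(1+N))^3)) := by
        apply mul_le_mul_of_nonneg_left ?_ (Real.rpow_nonneg h1N.le _)
        apply div_le_div₀ (mul_nonneg (Real.rpow_nonneg h1N.le _) (pow_nonneg h1N.le 2))
          (mul_le_mul hb1 hb2 (by positivity) (Real.rpow_nonneg h1N.le _))
          (mul_pos two_pos (pow_pos (mul_pos hα h1N) 3)) (by linarith [hb3])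
    _ = (2*α^3)⁻¹ * ((1+N)^(-κ) * ((1+N)^(κ/2) * (1+N)^(2:ℝ) / (1+N)^(3:ℝ))) := by
        rw [← e2, ← e3, mul_pow]
        field_simp
    _ = (2*α^3)⁻¹ * (1+N)^(-(1+κ/2)) := by rw [key]
    _ ≤ (α^3)⁻¹ * (1+N)^(-(1+κ/2)) := by
        apply mul_le_mul_of_nonneg_right ?_ (Real.rpow_nonneg h1N.le _)
        apply inv_anti₀ (pow_pos hα 3) (by nlinarith [pow_pos hα 3])

theorem gff_lattice_convergence_Hneg (m C : ℝ) (hm : 0 < m) (hC : 0 < C)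
    (κ : ℝ) (hκ0 : 0 < κ) (hκ4 : κ ≤ 4) :
    ∃ C' > 0, ∀ ε > (0:ℝ), ∀ qε q0 : ℝ → ℤ × ℤ → ℝ, ∀ h : ℤ × ℤ → ℝ,
      (∀ t ≥ (0:ℝ), ∀ k, q0 t k = Real.exp (-(t / 2) * (dualNormSq k + m ^ 2))) →
      (∀ t ≥ (0:ℝ), ∀ k, 0 ≤ qε t k ∧
          qε t k ≤ Real.exp (-(t / 2) * (dualNormSq k / 4 + m ^ 2))) →
      (∀ k, 0 ≤ h k ∧ h k ≤ min 1 (C * ε ^ 2 * dualNormSq k)) →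
      (∀ t ≥ (0:ℝ), ∀ k, 0 ≤ qε t k - q0 t k ∧
          qε t k - q0 t k
            ≤ Real.exp (-(t / 2) * (dualNormSq k / 4 + m ^ 2)) * (t / 2) * dualNormSq k * h k) →
      (∑' k : ℤ × ℤ,
          (1 + dualNormSq k) ^ (-κ) * ∫ u in Ioi (0:ℝ), (qε u k - q0 u k) ^ 2)
        ≤ C' * ε ^ κ := by
  set t : ℝ := 1/2 + κ/4 with ht_def
  have ht : 1/2 < t := by simp only [ht_def]; linarith
  have hF : Summable (fun k : ℤ × ℤ => (1 + (k.1:ℝ)^2) ^ (-t) * (1 + (k.2:ℝ)^2) ^ (-t)) :=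
    summable_prod_aux t ht
  set α : ℝ := min (1/4) (m^2) with hα_def
  have hα : 0 < α := lt_min (by norm_num) (pow_pos hm 2)
  set S : ℝ := ∑' k : ℤ × ℤ, (1 + (k.1:ℝ)^2) ^ (-t) * (1 + (k.2:ℝ)^2) ^ (-t) with hS_def
  have hS0 : 0 ≤ S := tsum_nonneg (fun k => by positivity)
  have hK0 : 0 ≤ C ^ (κ/2) * (α^3)⁻¹ * S :=
    mul_nonneg (mul_nonneg (Real.rpow_nonneg hC.le _) (inv_nonneg.mpr (pow_nonneg hα.le 3))) hS0
  refine ⟨C ^ (κ/2) * (α^3)⁻¹ * S + 1, by linarith, ?_⟩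
  intro ε hε qε q0 h hq0 hqε hh hd
  have hεκ : 0 < ε ^ κ := Real.rpow_pos_of_pos hε κ
  -- the per-term bound
  have main : ∀ k : ℤ × ℤ,
      (1 + dualNormSq k) ^ (-κ) * ∫ u in Ioi (0:ℝ), (qε u k - q0 u k)^2
        ≤ (C ^ (κ/2) * (α^3)⁻¹ * ε ^ κ) *
            ((1 + (k.1:ℝ)^2) ^ (-t) * (1 + (k.2:ℝ)^2) ^ (-t)) := by
    intro k
    have hN : 0 ≤ dualNormSq k := dualNormSq_nonneg k
    have ha0 : (0:ℝ) < dualNormSq k / 4 + m^2 :=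
      add_pos_of_nonneg_of_pos (div_nonneg hN (by norm_num)) (pow_pos hm 2)
    have haα : α * (1 + dualNormSq k) ≤ dualNormSq k / 4 + m^2 := by
      have h1 : α ≤ 1/4 := min_le_left _ _
      have h2 : α ≤ m^2 := min_le_right _ _
      nlinarith
    -- integrability of the dominating function
    have hg : IntegrableOn (fun u : ℝ => u ^ (2:ℕ) * Real.exp (-((dualNormSq k / 4 + m^2) * u)))
        (Ioi 0) := by
      have h0 := integrableOn_rpow_mul_exp_neg_mul_rpow (by norm_num : (-1:ℝ) < 2)
        one_pos ha0
      refine h0.congr_fun (fun x hx => ?_) measurableSet_Ioi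
      dsimp only
      rw [Real.rpow_one, show (2:ℝ) = ((2:ℕ):ℝ) by norm_num, Real.rpow_natCast]
      ring_nf
    -- value of the dominating integral
    have hval : ∫ u in Ioi (0:ℝ), u ^ (2:ℕ) * Real.exp (-((dualNormSq k / 4 + m^2) * u))
        = 2 / (dualNormSq k / 4 + m^2)^3 := by
      have h3 : (0:ℝ) < 3 := by norm_num
      have hI := Real.integral_rpow_mul_exp_neg_mul_Ioi h3 ha0
      norm_num at hI
      rw [hI, inv_mul_eq_div]
    -- comparison of integrals
    have hcmp : ∫ u in Ioi (0:ℝ), (qε u k - q0 u k)^2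
        ≤ ∫ u in Ioi (0:ℝ),
            (h k * dualNormSq k)^2/4 * (u ^ (2:ℕ) * Real.exp (-((dualNormSq k / 4 + m^2) * u))) := by
      apply integral_mono_of_nonneg
      · filter_upwards with u
        exact sq_nonneg _
      · exact hg.const_mul _
      · filter_upwards [self_mem_ae_restrict measurableSet_Ioi] with u hu
        have hu0 : (0:ℝ) < u := mem_Ioi.mp hu
        obtain ⟨hd0, hdle⟩ := hd u hu0.le k
        have hsq : (qε u k - q0 u k)^2
            ≤ (Real.exp (-(u/2) * (dualNormSq k / 4 + m^2)) * (u/2) * dualNormSq k * h k)^2 :=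
          pow_le_pow_left₀ hd0 hdle 2
        refine hsq.trans (le_of_eq ?_)
        have hexp : Real.exp (-(u/2) * (dualNormSq k / 4 + m^2)) ^ 2
            = Real.exp (-((dualNormSq k / 4 + m^2) * u)) := by
          rw [sq, ← Real.exp_add]; congr 1; ring
        rw [← hexp]; ring
    have hint : ∫ u in Ioi (0:ℝ), (qε u k - q0 u k)^2
        ≤ (h k)^2 * (dualNormSq k)^2 / (2 * (dualNormSq k / 4 + m^2)^3) := by
      refine hcmp.trans (le_of_eq ?_)
      rw [MeasureTheory.integral_const_mul, hval]
      field_simp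
      ring
    -- bound on h²
    have hh2 : (h k)^2 ≤ C^(κ/2) * ε^κ * (dualNormSq k)^(κ/2) := by
      obtain ⟨hh0, hhle⟩ := hh k
      have h1 : h k ≤ 1 := hhle.trans (min_le_left _ _)
      have hmin : h k ≤ C * ε^2 * dualNormSq k := hhle.trans (min_le_right _ _)
      have step1 : (h k)^2 ≤ (h k) ^ (κ/2) := by
        rcases eq_or_lt_of_le hh0 with h0 | h0
        · rw [← h0, Real.zero_rpow (ne_of_gt (by linarith : (0:ℝ) < κ/2))]
          norm_num
        · calc (h k)^2 = (h k)^((2:ℕ):ℝ) := (Real.rpow_natCast _ 2).symm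
            _ ≤ (h k)^(κ/2) := Real.rpow_le_rpow_of_exponent_ge h0 h1 (by push_cast; linarith)
      have step2 : (h k) ^ (κ/2) ≤ (C * ε^2 * dualNormSq k) ^ (κ/2) :=
        Real.rpow_le_rpow hh0 hmin (by linarith)
      have step3 : (C * ε^2 * dualNormSq k) ^ (κ/2)
          = C^(κ/2) * ε^κ * (dualNormSq k)^(κ/2) := by
        rw [Real.mul_rpow (mul_nonneg hC.le (sq_nonneg ε)) hN, Real.mul_rpow hC.le (sq_nonneg ε)]
        congr 2
        rw [← Real.rpow_natCast ε 2, ← Real.rpow_mul hε.le]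
        congr 1
        push_cast
        ring
      linarith [step1.trans (step2.trans_eq step3)]
    -- assemble
    have hRB := rpow_bound κ hκ0 hκ4 α (dualNormSq k) (dualNormSq k / 4 + m^2) hα hN haα ha0
    have hFk : (1 + dualNormSq k)^(-(1+κ/2))
        ≤ (1 + (k.1:ℝ)^2)^(-t) * (1 + (k.2:ℝ)^2)^(-t) := by
      have hP : (0:ℝ) < (1+(k.1:ℝ)^2) * (1+(k.2:ℝ)^2) := by positivity
      have hsum : (k.1:ℝ)^2 + (k.2:ℝ)^2 ≤ dualNormSq k := le_dualNormSq k
      have hbase : (1+(k.1:ℝ)^2) * (1+(k.2:ℝ)^2) ≤ (1 + dualNormSq k)^(2:ℕ) := by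
        nlinarith [sq_nonneg ((k.1:ℝ)^2 - (k.2:ℝ)^2), sq_nonneg ((k.1:ℝ)^2 + (k.2:ℝ)^2),
          sq_nonneg (k.1:ℝ), sq_nonneg (k.2:ℝ), hN]
      have hmono := Real.rpow_le_rpow_of_nonpos hP hbase (show -t ≤ 0 by rw [ht_def]; linarith)
      calc (1 + dualNormSq k)^(-(1+κ/2))
          = ((1 + dualNormSq k)^(2:ℕ))^(-t) := by
            rw [← Real.rpow_natCast (1 + dualNormSq k) 2,
              ← Real.rpow_mul (by linarith : (0:ℝ) ≤ 1 + dualNormSq k)]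
            congr 1
            push_cast
            simp only [ht_def]
            ring
        _ ≤ ((1+(k.1:ℝ)^2) * (1+(k.2:ℝ)^2))^(-t) := hmono
        _ = (1+(k.1:ℝ)^2)^(-t) * (1+(k.2:ℝ)^2)^(-t) :=
            Real.mul_rpow (by positivity) (by positivity)
    have h1Nκ : (0:ℝ) ≤ (1 + dualNormSq k)^(-κ) := Real.rpow_nonneg (by linarith) _
    calc (1 + dualNormSq k) ^ (-κ) * ∫ u in Ioi (0:ℝ), (qε u k - q0 u k)^2
        ≤ (1 + dualNormSq k) ^ (-κ) *
            ((h k)^2 * (dualNormSq k)^2 / (2 * (dualNormSq k / 4 + m^2)^3)) :=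
          mul_le_mul_of_nonneg_left hint h1Nκ
      _ ≤ (1 + dualNormSq k) ^ (-κ) *
            ((C^(κ/2) * ε^κ * (dualNormSq k)^(κ/2)) * (dualNormSq k)^2
              / (2 * (dualNormSq k / 4 + m^2)^3)) := by
          apply mul_le_mul_of_nonneg_left ?_ h1Nκ
          exact (div_le_div_iff_of_pos_right (mul_pos two_pos (pow_pos ha0 3))).mpr
            (mul_le_mul_of_nonneg_right hh2 (sq_nonneg _))
      _ = (C^(κ/2) * ε^κ) *
            ((1 + dualNormSq k) ^ (-κ) *
              ((dualNormSq k)^(κ/2) * (dualNormSq k)^2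
                / (2 * (dualNormSq k / 4 + m^2)^3))) := by ring
      _ ≤ (C^(κ/2) * ε^κ) * ((α^3)⁻¹ * (1 + dualNormSq k)^(-(1+κ/2))) := by
          exact mul_le_mul_of_nonneg_left hRB
            (mul_nonneg (Real.rpow_nonneg hC.le _) hεκ.le)
      _ ≤ (C^(κ/2) * ε^κ) *
            ((α^3)⁻¹ * ((1 + (k.1:ℝ)^2)^(-t) * (1 + (k.2:ℝ)^2)^(-t))) := by
          apply mul_le_mul_of_nonneg_left ?_ (mul_nonneg (Real.rpow_nonneg hC.le _) hεκ.le)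
          exact mul_le_mul_of_nonneg_left hFk (inv_nonneg.mpr (pow_nonneg hα.le 3))
      _ = (C ^ (κ/2) * (α^3)⁻¹ * ε ^ κ) *
            ((1 + (k.1:ℝ)^2) ^ (-t) * (1 + (k.2:ℝ)^2) ^ (-t)) := by ring
  -- sum up
  have hB : Summable (fun k : ℤ × ℤ => (C ^ (κ/2) * (α^3)⁻¹ * ε ^ κ) *
      ((1 + (k.1:ℝ)^2) ^ (-t) * (1 + (k.2:ℝ)^2) ^ (-t))) := hF.mul_left _
  have hGnn : ∀ k : ℤ × ℤ,
      0 ≤ (1 + dualNormSq k) ^ (-κ) * ∫ u in Ioi (0:ℝ), (qε u k - q0 u k)^2 := fun k =>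
    mul_nonneg (Real.rpow_nonneg (by linarith [dualNormSq_nonneg k]) _)
      (integral_nonneg (fun u => sq_nonneg _))
  have hGsum : Summable (fun k : ℤ × ℤ =>
      (1 + dualNormSq k) ^ (-κ) * ∫ u in Ioi (0:ℝ), (qε u k - q0 u k)^2) :=
    Summable.of_nonneg_of_le hGnn main hB
  calc (∑' k : ℤ × ℤ, (1 + dualNormSq k) ^ (-κ) * ∫ u in Ioi (0:ℝ), (qε u k - q0 u k)^2)
      ≤ ∑' k : ℤ × ℤ, (C ^ (κ/2) * (α^3)⁻¹ * ε ^ κ) *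
          ((1 + (k.1:ℝ)^2) ^ (-t) * (1 + (k.2:ℝ)^2) ^ (-t)) :=
        Summable.tsum_le_tsum main hGsum hB
    _ = (C ^ (κ/2) * (α^3)⁻¹ * ε ^ κ) * S := tsum_mul_left
    _ = (C ^ (κ/2) * (α^3)⁻¹ * S) * ε ^ κ := by ring
    _ ≤ (C ^ (κ/2) * (α^3)⁻¹ * S + 1) * ε ^ κ := by nlinarith [hεκ]
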